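/- Let n ≥ 2, β ≠ 0, ϑ₁,…,ϑₙ ∈ ℝ not all equal, B := (1/n)(∑ᵢϑᵢ)² − ∑ᵢϑᵢ², Πᵢⱼ := (μ−ϑᵢ)(μ−ϑⱼ) with μ the mean of the ϑᵢ. For real k > 0, the scattering matrix 𝒮ᵢⱼ(k) = 2/n − δᵢⱼ − 2ikβΠᵢⱼ/(1+ikβB) converges entrywise to −δᵢⱼ (i.e., to minus the identity matrix) as k → ∞. -/

import Mathlib

open Complex Filter in
theorem scattering_high_energy_limit (n : ℕ) (hn : 2 ≤ n) (β : ℝ) (hβ : β ≠ 0)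
    (ϑ : Fin n → ℝ) (hϑ : ∃ i j, ϑ i ≠ ϑ j)
    (B : ℝ) (hB : B = (1 / (n : ℝ)) * (∑ i, ϑ i) ^ 2 - ∑ i, (ϑ i) ^ 2)
    (P : Matrix (Fin n) (Fin n) ℝ)
    (hP : ∀ i j, P i j =
      ((1 / (n : ℝ)) * ∑ l, ϑ l - ϑ i) * ((1 / (n : ℝ)) * ∑ l, ϑ l - ϑ j))
    (S : ℝ → Matrix (Fin n) (Fin n) ℂ)
    (hS : ∀ k i j, S k i j = 2 / (n : ℂ) - (if i = j then 1 else 0)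
      - 2 * I * k * β * (P i j) / (1 + I * k * β * B)) :
    ∀ i j, Tendsto (fun k : ℝ => S k i j) atTop
      (nhds (2 / (n : ℂ) - (if i = j then 1 else 0) - 2 * (P i j) / (B : ℂ))) := by
  have hn0 : (n : ℝ) ≠ 0 := by positivity
  -- B ≠ 0
  set μ : ℝ := (1 / (n : ℝ)) * ∑ l, ϑ l with hμ
  have key : ∑ i, (ϑ i - μ)^2 = -B := by
    have : ∑ i, (ϑ i - μ)^2 = ∑ i, ((ϑ i)^2 - 2*μ*ϑ i + μ^2) := by
      apply Finset.sum_congr rfl; intro i _; ring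
    rw [this, Finset.sum_add_distrib, Finset.sum_sub_distrib, Finset.sum_const,
      ← Finset.mul_sum, Finset.card_univ, Fintype.card_fin, hB, hμ]
    field_simp
    have hnn : (n:ℝ)^2 * ((n:ℝ)⁻¹)^2 = 1 := by rw [← mul_pow, mul_inv_cancel₀ hn0, one_pow]
    linear_combination (∑ l, ϑ l) ^ 2 * hnn
  have hBneg : 0 < ∑ i, (ϑ i - μ)^2 := by
    obtain ⟨i, j, hij⟩ := hϑ
    have h : ϑ i ≠ μ ∨ ϑ j ≠ μ := by
      by_contra h; push_neg at h; exact hij (h.1.trans h.2.symm)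
    rcases h with h | h
    · exact Finset.sum_pos' (fun l _ => sq_nonneg _)
        ⟨i, Finset.mem_univ i, by have := sub_ne_zero.mpr h; positivity⟩
    · exact Finset.sum_pos' (fun l _ => sq_nonneg _)
        ⟨j, Finset.mem_univ j, by have := sub_ne_zero.mpr h; positivity⟩
  have hBne : B ≠ 0 := by intro h; rw [h] at key; simp at key; linarith
  have hβc : (β : ℂ) ≠ 0 := Complex.ofReal_ne_zero.mpr hβ
  have hBc : (B : ℂ) ≠ 0 := Complex.ofReal_ne_zero.mpr hBne
  intro i j
  have h1 : Tendsto (fun k : ℝ => ((I * k : ℂ))⁻¹) atTop (nhds 0) := by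
    rw [tendsto_zero_iff_norm_tendsto_zero]
    have h0 : (fun k : ℝ => k⁻¹) =ᶠ[atTop] fun k : ℝ => ‖((I * k : ℂ))⁻¹‖ := by
      filter_upwards [eventually_gt_atTop 0] with k hk
      simp [norm_inv, abs_of_pos hk]
    exact Tendsto.congr' h0 tendsto_inv_atTop_zero
  have h2 : Tendsto (fun z : ℂ => 2 * β * (P i j) / (z + β * B)) (nhds 0)
      (nhds (2 * (P i j) / B)) := by
    have hd : (0 : ℂ) + β * B ≠ 0 := by
      simpa using mul_ne_zero hβc hBc
    have ht := Tendsto.div (tendsto_const_nhds (x := (2 * β * (P i j) : ℂ)))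
      ((continuous_id.add continuous_const).tendsto 0) hd
    have he : (2 * (P i j) / B : ℂ) = 2 * β * (P i j) / ((0:ℂ) + β * B) := by
      rw [zero_add]; field_simp
    rw [he]; exact ht
  have h3 : Tendsto (fun k : ℝ => (2 * I * k * β * (P i j) : ℂ) / (1 + I * k * β * B))
      atTop (nhds (2 * (P i j) / B)) := by
    refine Tendsto.congr' ?_ (h2.comp h1)
    filter_upwards [eventually_gt_atTop 0] with k hk
    have hIk : (I * k : ℂ) ≠ 0 := by
      apply mul_ne_zero I_ne_zero
      exact_mod_cast ne_of_gt hk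
    have hden : (1 : ℂ) + I * k * β * B ≠ 0 := by
      intro h
      have h2 := congrArg Complex.im h
      simp [Complex.add_im, Complex.mul_im, Complex.mul_re] at h2
      rcases h2 with (h2 | h2) | h2
      · exact ne_of_gt hk h2
      · exact hβ h2
      · exact hBne h2
    simp only [Function.comp]
    have hrw : ((I * k : ℂ))⁻¹ + β * B = (1 + I * k * β * B) / (I * k) := by
      field_simp
      have hk0 : (k:ℂ) ≠ 0 := by exact_mod_cast ne_of_gt hk
      rw [eq_div_iff hk0, add_mul, one_div, inv_mul_cancel₀ hk0]; ring
    rw [hrw, div_div_eq_mul_div]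
    ring
  have heq : (fun k : ℝ => S k i j) = fun k : ℝ =>
      (2 / (n : ℂ) - (if i = j then 1 else 0)) - (2 * I * k * β * (P i j) : ℂ) / (1 + I * k * β * B) := by
    funext k; rw [hS]
  rw [heq]
  have := (tendsto_const_nhds (x := (2 / (n : ℂ) - (if i = j then 1 else 0)))).sub h3
  exact this
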